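/- For every fixed integer N ≥ 4, the finite sequence j ↦ s_N^{(j)} is non-increasing: s_N^{(j)} ≤ s_N^{(j−1)} for all 1 ≤ j ≤ N−3. -/
import Mathlib


open Real Finset

/-- I_s = [(π−s)/2, (π+s)/2]. -/
noncomputable def Iset (s : ℝ) : Set ℝ := Set.Icc ((Real.pi - s) / 2) ((Real.pi + s) / 2)

/-- F(x₁,…,x_{2r}) = Σ_{m=1}^{r} cos(a_m)cos(b_m)·∏_{ℓ=1}^{m−1} sin(a_ℓ)sin(b_ℓ),
where a_m = x_{2m−1}, b_m = x_{2m}. -/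
noncomputable def Fangle (a b : ℕ → ℝ) (r : ℕ) : ℝ :=
  ∑ m ∈ Finset.Icc 1 r, Real.cos (a m) * Real.cos (b m) *
    ∏ l ∈ Finset.Icc 1 (m - 1), (Real.sin (a l) * Real.sin (b l))

/-- X(x₁,…,x_{2r}) = ∏_{m=1}^{r} sin(a_m)sin(b_m). -/
noncomputable def Xangle (a b : ℕ → ℝ) (r : ℕ) : ℝ :=
  ∏ m ∈ Finset.Icc 1 r, (Real.sin (a m) * Real.sin (b m))

/-- E(m,s) = m·sin²(s/2) − cos(s/2)^{2m} + sin(s/2). -/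
noncomputable def Efun (m : ℕ) (s : ℝ) : ℝ :=
  (m : ℝ) * Real.sin (s / 2) ^ 2 - Real.cos (s / 2) ^ (2 * m) + Real.sin (s / 2)

/-- G(N,j,x,s) = (N−j−2)·sin²(s/2) − sin(x/2)·cos(s/2)^{2(N−j−2)} + sin(s/2). -/
noncomputable def Gfun (N j : ℕ) (x s : ℝ) : ℝ :=
  ((N - j - 2 : ℕ) : ℝ) * Real.sin (s / 2) ^ 2
    - Real.sin (x / 2) * Real.cos (s / 2) ^ (2 * (N - j - 2)) + Real.sin (s / 2)

/-- The sequence s_N^{(j)}: s_N^{(0)} = inf{s > 0 : E(N−2,s) = 0},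
s_N^{(j)} = inf{s > 0 : G(N,j,s_N^{(j−1)},s) = 0}. -/
noncomputable def sSeq (N : ℕ) : ℕ → ℝ
  | 0 => sInf {s : ℝ | 0 < s ∧ Efun (N - 2) s = 0}
  | j + 1 => sInf {s : ℝ | 0 < s ∧ Gfun N (j + 1) (sSeq N j) s = 0}

/-- s is N-good: for all x₁,…,x_{2(N−2)} ∈ I_s,
I_s ⊆ α_{N−1,N}({x₁}×⋯×{x_{2(N−2)}}×(0,π)). -/
def NGood (N : ℕ) (s : ℝ) : Prop :=
  ∀ a b : ℕ → ℝ, (∀ m ∈ Finset.Icc 1 (N - 2), a m ∈ Iset s ∧ b m ∈ Iset s) →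
    ∀ y ∈ Iset s, ∃ φ ∈ Set.Ioo (0 : ℝ) Real.pi,
      Real.arccos (Fangle a b (N - 2) + Real.cos φ * Xangle a b (N - 2)) = y

/-- s is (N,j)-good: for all x₁,…,x_{2(N−j−2)} ∈ I_s,
I_s ⊆ α_{N−j−1,N−j}({x₁}×⋯×{x_{2(N−j−2)}}×I_{s_N^{(j−1)}}). -/
def NjGood (N j : ℕ) (s : ℝ) : Prop :=
  ∀ a b : ℕ → ℝ, (∀ m ∈ Finset.Icc 1 (N - j - 2), a m ∈ Iset s ∧ b m ∈ Iset s) →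
    ∀ y ∈ Iset s, ∃ φ ∈ Iset (sSeq N (j - 1)),
      Real.arccos (Fangle a b (N - j - 2) + Real.cos φ * Xangle a b (N - j - 2)) = y

lemma key_sInf_mem (f : ℝ → ℝ) (hf : Continuous f) (h0 : f 0 < 0) (hπ : 0 ≤ f Real.pi) :
    sInf {s : ℝ | 0 < s ∧ f s = 0} ∈ Set.Ioc 0 Real.pi := by
  obtain ⟨r, hrIcc, hr⟩ := intermediate_value_Icc Real.pi_pos.le hf.continuousOn ⟨h0.le, hπ⟩
  have hrpos : 0 < r := by
    rcases hrIcc.1.lt_or_eq with h | h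
    · exact h
    · exact absurd hr (by rw [← h]; exact h0.ne)
  have hne : Set.Nonempty {s : ℝ | 0 < s ∧ f s = 0} := ⟨r, hrpos, hr⟩
  have hbdd : BddBelow {s : ℝ | 0 < s ∧ f s = 0} := ⟨0, fun s hs => hs.1.le⟩
  have hopen : IsOpen {s : ℝ | f s < 0} := isOpen_lt hf continuous_const
  obtain ⟨δ, hδ, hball⟩ := Metric.isOpen_iff.mp hopen 0 h0
  constructor
  · refine lt_of_lt_of_le hδ (le_csInf hne fun s hs => ?_)
    by_contra h
    push_neg at h
    have : s ∈ Metric.ball (0 : ℝ) δ := by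
      simp [Real.dist_eq, abs_of_pos hs.1]
      exact h
    exact absurd hs.2 (ne_of_lt (hball this))
  · exact (csInf_le hbdd ⟨hrpos, hr⟩).trans hrIcc.2

lemma sSeq_mem_Ioc (N j : ℕ) : sSeq N j ∈ Set.Ioc 0 Real.pi := by
  induction j with
  | zero =>
    show sInf {s : ℝ | 0 < s ∧ Efun (N - 2) s = 0} ∈ Set.Ioc 0 Real.pi
    apply key_sInf_mem
    · unfold Efun; fun_prop
    · norm_num [Efun]
    · have h1 : (0 : ℝ) ^ (2 * (N - 2)) ≤ 1 := pow_le_one₀ le_rfl one_pos.le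
      have h2 : (0 : ℝ) ≤ ((N - 2 : ℕ) : ℝ) := Nat.cast_nonneg _
      simp only [Efun, Real.sin_pi_div_two, Real.cos_pi_div_two]
      nlinarith
  | succ k ih =>
    have ht : 0 < Real.sin (sSeq N k / 2) :=
      Real.sin_pos_of_pos_of_lt_pi (by linarith [ih.1]) (by linarith [ih.2, Real.pi_pos])
    have ht1 : Real.sin (sSeq N k / 2) ≤ 1 := Real.sin_le_one _
    show sInf {s : ℝ | 0 < s ∧ Gfun N (k + 1) (sSeq N k) s = 0} ∈ Set.Ioc 0 Real.pi
    apply key_sInf_mem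
    · unfold Gfun; fun_prop
    · simp only [Gfun, Real.sin_zero, Real.cos_zero, one_pow, zero_div]
      nlinarith
    · have h1 : (0 : ℝ) ^ (2 * (N - (k + 1) - 2)) ≤ 1 := pow_le_one₀ le_rfl one_pos.le
      have h1' : (0 : ℝ) ≤ (0 : ℝ) ^ (2 * (N - (k + 1) - 2)) := pow_nonneg le_rfl _
      have h2 : (0 : ℝ) ≤ ((N - (k + 1) - 2 : ℕ) : ℝ) := Nat.cast_nonneg _
      simp only [Gfun, Real.sin_pi_div_two, Real.cos_pi_div_two]
      nlinarith

/-- j ↦ s_N^{(j)} is non-increasing. -/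
theorem sSeq_antitone (N : ℕ) (hN : 4 ≤ N) (j : ℕ) (hj1 : 1 ≤ j) (hj2 : j ≤ N - 3) :
    sSeq N j ≤ sSeq N (j - 1) := by
  obtain ⟨k, rfl⟩ : ∃ k, j = k + 1 := ⟨j - 1, (Nat.succ_pred_eq_of_pos hj1).symm⟩
  simp only [Nat.add_sub_cancel]
  set x := sSeq N k with hxdef
  have hx : x ∈ Set.Ioc 0 Real.pi := sSeq_mem_Ioc N k
  have ht : 0 < Real.sin (x / 2) :=
    Real.sin_pos_of_pos_of_lt_pi (by linarith [hx.1]) (by linarith [hx.2, Real.pi_pos])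
  have hcont : Continuous (fun s => Gfun N (k + 1) x s) := by unfold Gfun; fun_prop
  have h0 : Gfun N (k + 1) x 0 < 0 := by
    simp only [Gfun, Real.sin_zero, Real.cos_zero, one_pow, zero_div]
    nlinarith
  have hc : Real.cos (x / 2) ^ (2 * (N - (k + 1) - 2)) ≤ 1 := by
    rw [pow_mul]
    exact pow_le_one₀ (sq_nonneg _) (Real.cos_sq_le_one _)
  have hxx : 0 ≤ Gfun N (k + 1) x x := by
    simp only [Gfun]
    have h2 : (0 : ℝ) ≤ ((N - (k + 1) - 2 : ℕ) : ℝ) := Nat.cast_nonneg _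
    nlinarith [mul_nonneg ht.le (sub_nonneg.mpr hc), mul_nonneg h2 (sq_nonneg (Real.sin (x / 2)))]
  obtain ⟨r, hrIcc, hr⟩ := intermediate_value_Icc hx.1.le hcont.continuousOn ⟨h0.le, hxx⟩
  have hrpos : 0 < r := by
    rcases hrIcc.1.lt_or_eq with h | h
    · exact h
    · exact absurd hr (by rw [← h]; exact h0.ne)
  have hbdd : BddBelow {s : ℝ | 0 < s ∧ Gfun N (k + 1) x s = 0} :=
    ⟨0, fun s hs => hs.1.le⟩
  have hmem : r ∈ {s : ℝ | 0 < s ∧ Gfun N (k + 1) x s = 0} := ⟨hrpos, hr⟩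
  show sInf {s : ℝ | 0 < s ∧ Gfun N (k + 1) x s = 0} ≤ x
  exact (csInf_le hbdd hmem).trans hrIcc.2
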